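/- The Rényi map has mild distortion: for ψ(x) = log f'(x) = −2·log(1−x) one has D_1(ψ) < ∞ and D_n(ψ)/n → 0 as n → ∞; equivalently, (1/n)·sup over words w of length n of sup_{x,y ∈ Δ_w} log( (fⁿ)'(x) / (fⁿ)'(y) ) tends to 0, where (fⁿ)'(x) = ∏_{j=0}^{n−1} (1 − f^j(x))^{−2}. -/

import Mathlib

open Filter MeasureTheory Set

/-- The Rényi (backward continued fraction) map `f(x) = 1/(1−x) − ⌊1/(1−x)⌋`. -/
noncomputable def renyi (x : ℝ) : ℝ := 1 / (1 - x) - (⌊1 / (1 - x)⌋ : ℤ)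

/-- The `j`-th backward continued fraction digit (`j ≥ 1`):
`b_j(x) = ⌊1/(1 − f^{j−1}(x))⌋ + 1`. -/
noncomputable def bcf (j : ℕ) (x : ℝ) : ℤ := ⌊1 / (1 - renyi^[j - 1] x)⌋ + 1

/-- Birkhoff sum `S_n φ = Σ_{j=0}^{n-1} φ ∘ f^j` for the Rényi map. -/
noncomputable def birkR (φ : ℝ → ℝ) (n : ℕ) (x : ℝ) : ℝ :=
  ∑ j ∈ Finset.range n, φ (renyi^[j] x)

/-- The derivative of the `n`-th iterate of the Rényi map:
`(fⁿ)'(x) = ∏_{j=0}^{n−1} (1 − f^j(x))^{−2}`. -/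
noncomputable def renyiDn (n : ℕ) (x : ℝ) : ℝ :=
  ∏ j ∈ Finset.range n, ((1 - renyi^[j] x)⁻¹) ^ 2

/-- The cylinder `Δ_w = {x ∈ [0,1) : b_j(x) = w_j for 1 ≤ j ≤ n}` of a word
`w` of length `n` of integers. -/
def rcyl (n : ℕ) (w : Fin n → ℤ) : Set ℝ :=
  {x ∈ Set.Ico (0 : ℝ) 1 | ∀ i : Fin n, bcf ((i : ℕ) + 1) x = w i}

/-- `φ` belongs to the class `𝓕` for the Rényi map: there is a bound `D n` on
`S_nφ(x) − S_nφ(y)` over pairs `x, y` in a common `n`-cylinder (in particular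
`D_1(φ) < ∞`), with `D n / n → 0` (i.e. `D_n(φ) = o(n)`). -/
def MemFR (φ : ℝ → ℝ) : Prop :=
  ∃ D : ℕ → ℝ,
    (∀ n : ℕ, ∀ w : Fin n → ℤ, (∀ i, 2 ≤ w i) →
      ∀ x ∈ rcyl n w, ∀ y ∈ rcyl n w, birkR φ n x - birkR φ n y ≤ D n) ∧
    Tendsto (fun n : ℕ => D n / n) atTop (nhds 0)

lemma renyi_mem (x : ℝ) : renyi x ∈ Set.Ico (0:ℝ) 1 := by
  unfold renyi
  constructor
  · linarith [Int.floor_le (1/(1-x))]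
  · have := Int.lt_floor_add_one (1/(1-x)); push_cast; linarith

lemma iter_mem {x : ℝ} (hx : x ∈ Set.Ico (0:ℝ) 1) (j : ℕ) :
    renyi^[j] x ∈ Set.Ico (0:ℝ) 1 := by
  induction j with
  | zero => simpa using hx
  | succ n ih => rw [Function.iterate_succ_apply']; exact renyi_mem _

lemma key (n : ℕ) (w : Fin n → ℤ) (hw : ∀ i, 2 ≤ w i) :
    ∃ c d : ℝ, 0 ≤ c ∧ 1 ≤ d ∧ c ≤ n * d ∧
      ∀ x ∈ rcyl n w,
        ∏ j ∈ Finset.range n, (1 - renyi^[j] x) = 1 / (c * renyi^[n] x + d) := by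
  induction n with
  | zero => exact ⟨0, 1, le_refl _, le_refl _, by simp, fun x hx => by simp⟩
  | succ n ih =>
    obtain ⟨c, d, hc, hd, hcd, hprod⟩ := ih (fun i => w i.castSucc) (fun i => hw _)
    have hb : (2:ℝ) ≤ (w (Fin.last n) : ℝ) := by exact_mod_cast hw (Fin.last n)
    set b : ℝ := (w (Fin.last n) : ℝ) with hbdef
    refine ⟨c + d, d * (b - 1) + c * (b - 2), by linarith, by nlinarith, ?_, ?_⟩
    · push_cast
      nlinarith [mul_nonneg (mul_nonneg (by positivity : (0:ℝ) ≤ (n:ℝ)+1) (le_trans zero_le_one hd)) (by linarith : (0:ℝ) ≤ b - 2),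
        mul_nonneg (mul_nonneg (by positivity : (0:ℝ) ≤ (n:ℝ)+1) hc) (by linarith : (0:ℝ) ≤ b - 2)]
    · intro x hx
      have hx0 : x ∈ Set.Ico (0:ℝ) 1 := hx.1
      have hx' : x ∈ rcyl n (fun i => w i.castSucc) := by
        refine ⟨hx.1, fun i => ?_⟩
        have := hx.2 i.castSucc
        simpa using this
      set s : ℝ := renyi^[n] x with hsdef
      have hs : s ∈ Set.Ico (0:ℝ) 1 := iter_mem hx0 n
      have hs1 : (0:ℝ) < 1 - s := by linarith [hs.2]
      have hlast := hx.2 (Fin.last n)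
      have hfloor : ⌊1/(1-s)⌋ = w (Fin.last n) - 1 := by
        have : bcf (n+1) x = w (Fin.last n) := by simpa using hlast
        unfold bcf at this
        simp only [Nat.add_sub_cancel] at this
        rw [← hsdef] at this
        omega
      have hfl : ((w (Fin.last n) : ℝ) - 1) ≤ 1/(1-s) ∧ 1/(1-s) < (w (Fin.last n) : ℝ) := by
        constructor
        · have := Int.floor_le (1/(1-s)); rw [hfloor] at this; push_cast at this; linarith
        · have := Int.lt_floor_add_one (1/(1-s)); rw [hfloor] at this; push_cast at this; linarith
      set t : ℝ := renyi^[n+1] x with htdef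
      have ht : t = 1/(1-s) - (b - 1) := by
        rw [htdef, Function.iterate_succ_apply', ← hsdef]
        unfold renyi
        rw [hfloor]; push_cast; ring
      have htb : t + (b - 1) = 1/(1-s) := by rw [ht]; ring
      have htbpos : 0 < t + (b - 1) := by rw [htb]; positivity
      have h1 : (1 - s) * (t + (b - 1)) = 1 := by
        rw [htb]; field_simp
      have ht0 : 0 ≤ t := (iter_mem hx0 (n+1)).1
      have hA : 0 < c * s + d := by nlinarith [hs.1]
      have hB : 0 < (c + d) * t + (d * (b - 1) + c * (b - 2)) := by nlinarith
      rw [Finset.prod_range_succ, hprod x hx']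
      rw [div_mul_eq_mul_div, one_mul, div_eq_div_iff hA.ne' hB.ne']
      push_cast
      linear_combination (c + d) * h1

lemma log_div_tendsto :
    Tendsto (fun n : ℕ => (2 * Real.log ((n:ℝ) + 1)) / n) atTop (nhds 0) := by
  have h1 : (fun x : ℝ => Real.log (x + 1)) =o[atTop] (fun x : ℝ => x + 1) :=
    Real.isLittleO_log_id_atTop.comp_tendsto (tendsto_atTop_add_const_right atTop 1 tendsto_id)
  have h2 : (fun x : ℝ => x + 1) =O[atTop] (fun x : ℝ => x) := by
    apply Asymptotics.IsBigO.of_bound 2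
    filter_upwards [eventually_ge_atTop (1:ℝ)] with x hx
    rw [Real.norm_eq_abs, Real.norm_eq_abs, abs_of_nonneg (by linarith : (0:ℝ) ≤ x + 1), abs_of_nonneg (by linarith : (0:ℝ) ≤ x)]
    linarith
  have h3 : (fun x : ℝ => 2 * Real.log (x + 1)) =o[atTop] (fun x : ℝ => x) :=
    ((h1.trans_isBigO h2).const_mul_left 2)
  have h4 := h3.tendsto_div_nhds_zero
  exact h4.comp tendsto_natCast_atTop_atTop

theorem renyi_mild_distortion :
    MemFR (fun x : ℝ => -2 * Real.log (1 - x)) := by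
  refine ⟨fun n => 2 * Real.log ((n:ℝ) + 1), ?_, log_div_tendsto⟩
  intro n w hw x hx y hy
  obtain ⟨c, d, hc, hd, hcd, hprod⟩ := key n w hw
  have birk_eq : ∀ z ∈ rcyl n w,
      birkR (fun x : ℝ => -2 * Real.log (1 - x)) n z
        = 2 * Real.log (c * renyi^[n] z + d) := by
    intro z hz
    unfold birkR
    have hpos : ∀ j ∈ Finset.range n, (1 - renyi^[j] z) ≠ 0 := by
      intro j _
      have := (iter_mem hz.1 j).2
      intro h; linarith [this]
    rw [show (∑ j ∈ Finset.range n, -2 * Real.log (1 - renyi^[j] z))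
        = -2 * ∑ j ∈ Finset.range n, Real.log (1 - renyi^[j] z) from
      (Finset.mul_sum _ _ _).symm]
    rw [← Real.log_prod hpos, hprod z hz, one_div, Real.log_inv]
    ring
  show birkR _ n x - birkR _ n y ≤ 2 * Real.log ((n:ℝ) + 1)
  rw [birk_eq x hx, birk_eq y hy]
  have htx : renyi^[n] x < 1 := (iter_mem hx.1 n).2
  have hty : 0 ≤ renyi^[n] y := (iter_mem hy.1 n).1
  have htx0 : 0 ≤ renyi^[n] x := (iter_mem hx.1 n).1
  have hAx : 0 < c * renyi^[n] x + d := by nlinarith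
  have hAy : 0 < c * renyi^[n] y + d := by nlinarith
  have h1 : Real.log (c * renyi^[n] x + d) ≤ Real.log (((n:ℝ) + 1) * d) := by
    apply Real.log_le_log hAx
    nlinarith
  have h2 : Real.log (((n:ℝ) + 1) * d) = Real.log ((n:ℝ) + 1) + Real.log d := by
    rw [Real.log_mul (by positivity) (by linarith)]
  have h3 : Real.log d ≤ Real.log (c * renyi^[n] y + d) := by
    apply Real.log_le_log (by linarith)
    nlinarith
  linarith
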